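/- arXiv:2203.13512 — 2 statements merged into one kernel-verified Lean document; each statement's English description precedes it below -/
import Mathlib

section
/- The arboricity α, degeneracy β, and h-index γ of a finite simple graph satisfy α ≤ β ≤ 2α − 1 (for graphs with at least one edge). -/
/-- The degeneracy of `G`: the maximum over all (nonempty) induced subgraphs of
the minimum degree, expressed as the largest `d` such that some nonempty vertex
set induces a subgraph with all degrees at least `d`. -/
noncomputable def degeneracy {V : Type*} [Fintype V] (G : SimpleGraph V)
    [DecidableRel G.Adj] : ℕ :=
  sSup {d : ℕ | ∃ s : Finset V, s.Nonempty ∧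
    ∀ v ∈ s, d ≤ (s.filter (fun w => G.Adj v w)).card}

/-- The arboricity of `G`: the minimum number of forests into which the edges of
`G` can be partitioned. -/
noncomputable def arboricity {V : Type*} [Fintype V] (G : SimpleGraph V) : ℕ :=
  sInf {n : ℕ | ∃ F : Fin n → SimpleGraph V, (∀ i, (F i).IsAcyclic) ∧
    (∀ i, F i ≤ G) ∧ ∀ u v, G.Adj u v → ∃! i, (F i).Adj u v}

set_option linter.unusedSectionVars false


section Forest
variable {V : Type*} [Fintype V]

lemma path_head_edge {H : SimpleGraph V} {b v w : V} (q : H.Walk b v)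
    (hq : q.IsPath) (he : s(b, w) ∈ q.edges) :
    ∃ (h : H.Adj b w) (q' : H.Walk w v), q = SimpleGraph.Walk.cons h q' := by
  cases q with
  | nil => simp at he
  | @cons _ x _ h' q₂ =>
    rw [SimpleGraph.Walk.edges_cons, List.mem_cons] at he
    rcases he with he | he
    · have hwx : w = x := by
        rw [Sym2.eq_iff] at he
        rcases he with ⟨-, h1⟩ | ⟨h1, h2⟩
        · exact h1
        · exact absurd h1 h'.ne
      subst hwx
      exact ⟨h', q₂, rfl⟩
    · rw [SimpleGraph.Walk.cons_isPath_iff] at hq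
      exact absurd (SimpleGraph.Walk.fst_mem_support_of_mem_edges q₂ he) hq.2

open Classical in
lemma exists_leaf {H : SimpleGraph V} (hH : H.IsAcyclic) (s : Finset V) (hs : s.Nonempty) :
    ∃ v ∈ s, (s.filter (fun w => H.Adj v w)).card ≤ 1 := by
  classical
  obtain ⟨v0, hv0⟩ := hs
  set P : Set ℕ := {n | ∃ (a b : V) (p : H.Walk a b), p.IsPath ∧
    (∀ x ∈ p.support, x ∈ s) ∧ p.length = n} with hPdef
  have hP0 : 0 ∈ P := ⟨v0, v0, .nil, by simp, by simp [hv0], rfl⟩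
  have hbdd : BddAbove P := by
    refine ⟨Fintype.card V, ?_⟩
    rintro n ⟨a, b, p, hp, -, rfl⟩
    exact hp.length_lt.le
  obtain ⟨a, b, p, hp, hsup, hlen⟩ := Nat.sSup_mem ⟨0, hP0⟩ hbdd
  refine ⟨b, hsup b p.end_mem_support, ?_⟩
  have hsub : s.filter (fun w => H.Adj b w) ⊆ {p.reverse.getVert 1} := by
    intro w hw
    rw [Finset.mem_filter] at hw
    obtain ⟨hws, hadj⟩ := hw
    by_cases hmem : w ∈ p.support
    · have hwr : w ∈ p.reverse.support := by
        rw [SimpleGraph.Walk.support_reverse, List.mem_reverse]; exact hmem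
      have hq : (p.reverse.takeUntil w hwr).IsPath := hp.reverse.takeUntil _
      have hnc := hH (SimpleGraph.Walk.cons hadj.symm (p.reverse.takeUntil w hwr))
      rw [SimpleGraph.Walk.cons_isCycle_iff] at hnc
      push_neg at hnc
      have hedge : s(b, w) ∈ (p.reverse.takeUntil w hwr).edges := by
        have := hnc hq
        rwa [Sym2.eq_swap] at this
      obtain ⟨h1, q', hq'⟩ := path_head_edge _ hq hedge
      have hnil : q' = SimpleGraph.Walk.nil := by
        have hq'path : q'.IsPath := by
          rw [hq', SimpleGraph.Walk.cons_isPath_iff] at hq; exact hq.1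
        rwa [SimpleGraph.Walk.isPath_iff_eq_nil] at hq'path
      have hts := p.reverse.take_spec hwr
      have hgv : p.reverse.getVert 1 = w := by
        conv_lhs => rw [← hts, hq', hnil]
        simp [SimpleGraph.Walk.cons_append, SimpleGraph.Walk.nil_append,
          SimpleGraph.Walk.getVert_cons_succ, SimpleGraph.Walk.getVert_zero]
      simp [hgv]
    · exfalso
      have hP' : p.length + 1 ∈ P := by
        refine ⟨w, a, SimpleGraph.Walk.cons hadj.symm p.reverse, ?_, ?_, by simp⟩
        · rw [SimpleGraph.Walk.cons_isPath_iff]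
          exact ⟨hp.reverse, by rwa [SimpleGraph.Walk.support_reverse, List.mem_reverse]⟩
        · intro x hx
          rw [SimpleGraph.Walk.support_cons, List.mem_cons] at hx
          rcases hx with rfl | hx
          · exact hws
          · rw [SimpleGraph.Walk.support_reverse, List.mem_reverse] at hx
            exact hsup x hx
      have := le_csSup hbdd hP'
      omega
  calc (s.filter (fun w => H.Adj b w)).card ≤ ({p.reverse.getVert 1} : Finset V).card :=
        Finset.card_le_card hsub
    _ = 1 := Finset.card_singleton _

open Classical in
lemma forest_sum {H : SimpleGraph V} (hH : H.IsAcyclic) (s : Finset V) :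
    (∑ v ∈ s, (s.filter (fun w => H.Adj v w)).card) ≤ 2 * (s.card - 1) := by
  classical
  induction s using Finset.strongInduction with
  | _ s ih =>
    rcases s.eq_empty_or_nonempty with rfl | hs
    · simp
    obtain ⟨v, hv, hleaf⟩ := exists_leaf hH s hs
    obtain ⟨t, hvs', hss⟩ : ∃ t : Finset V, v ∉ t ∧ s = insert v t :=
      ⟨s.erase v, Finset.notMem_erase v s, (Finset.insert_erase hv).symm⟩
    have htsub : t ⊂ s := by rw [hss]; exact Finset.ssubset_insert hvs'
    have hcard : ∀ u, (s.filter (fun w => H.Adj u w)).card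
        = (t.filter (fun w => H.Adj u w)).card + (if H.Adj u v then 1 else 0) := by
      intro u
      conv_lhs => rw [hss]
      rw [Finset.filter_insert]
      by_cases hadj : H.Adj u v
      · rw [if_pos hadj, if_pos hadj, Finset.card_insert_of_notMem (by
          simp only [Finset.mem_filter]; exact fun hc => hvs' hc.1)]
      · rw [if_neg hadj, if_neg hadj, Nat.add_zero]
    have hsum : (∑ u ∈ s, (s.filter (fun w => H.Adj u w)).card)
        = (∑ u ∈ t, (t.filter (fun w => H.Adj u w)).card)
          + 2 * (t.filter (fun w => H.Adj v w)).card := by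
      rw [Finset.sum_congr rfl (fun u _ => hcard u)]
      conv_lhs => rw [hss]
      rw [Finset.sum_insert hvs', Finset.sum_add_distrib]
      rw [if_neg (H.irrefl), Nat.add_zero]
      have h1 : (∑ u ∈ t, if H.Adj u v then 1 else 0)
          = (t.filter (fun u => H.Adj u v)).card := by
        rw [Finset.sum_boole]; simp
      have h2 : t.filter (fun u => H.Adj u v) = t.filter (fun w => H.Adj v w) := by
        apply Finset.filter_congr; intro x _; simp [SimpleGraph.adj_comm]
      rw [h1, h2]; ring
    have hD : (t.filter (fun w => H.Adj v w)).card ≤ 1 := by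
      refine le_trans (Finset.card_le_card ?_) hleaf
      refine Finset.filter_subset_filter _ ?_
      rw [hss]; exact Finset.subset_insert v t
    have hIH := ih t htsub
    have hc1 : 1 ≤ s.card := Finset.card_pos.mpr hs
    have hce : s.card = t.card + 1 := by rw [hss, Finset.card_insert_of_notMem hvs']
    rcases Nat.eq_zero_or_pos t.card with h0 | hpos
    · rw [Finset.card_eq_zero] at h0
      subst h0
      rw [hsum]
      simp
    · omega
end Forest

section Deg
variable {V : Type*} [Fintype V] (G : SimpleGraph V) [DecidableRel G.Adj]

lemma degSet_bddAbove :
    BddAbove {d : ℕ | ∃ s : Finset V, s.Nonempty ∧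
      ∀ v ∈ s, d ≤ (s.filter (fun w => G.Adj v w)).card} := by
  refine ⟨Fintype.card V, ?_⟩
  rintro d ⟨s, ⟨v, hv⟩, hd⟩
  exact le_trans (hd v hv) (le_trans (Finset.card_le_card (Finset.filter_subset _ _))
    (Finset.card_le_univ s))

lemma exists_small_degree (s : Finset V) (hs : s.Nonempty) :
    ∃ v ∈ s, (s.filter (fun w => G.Adj v w)).card ≤ degeneracy G := by
  by_contra hcon
  push_neg at hcon
  have hmem : degeneracy G + 1 ∈ {d : ℕ | ∃ s : Finset V, s.Nonempty ∧
      ∀ v ∈ s, d ≤ (s.filter (fun w => G.Adj v w)).card} :=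
    ⟨s, hs, fun v hv => hcon v hv⟩
  have h := le_csSup (degSet_bddAbove G) hmem
  rw [degeneracy] at *
  omega

lemma exists_ordering (s : Finset V) :
    ∃ ord : V → ℕ, Set.InjOn ord ↑s ∧ (∀ v ∈ s, ord v < s.card) ∧
      ∀ v ∈ s, (s.filter (fun w => G.Adj v w ∧ ord w < ord v)).card ≤ degeneracy G := by
  classical
  induction s using Finset.strongInduction with
  | _ s ih =>
    rcases s.eq_empty_or_nonempty with rfl | hs
    · exact ⟨fun _ => 0, by simp, by simp, by simp⟩
    obtain ⟨v, hv, hdeg⟩ := exists_small_degree G s hs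
    obtain ⟨ord, hinj, hlt, hbound⟩ := ih (s.erase v) (Finset.erase_ssubset hv)
    set M := (s.erase v).card with hM
    have hMlt : M < s.card := Finset.card_erase_lt_of_mem hv
    refine ⟨fun x => if x = v then M else ord x, ?_, ?_, ?_⟩
    · intro x hx y hy hxy
      simp only [Finset.mem_coe] at hx hy
      dsimp only at hxy
      by_cases hxv : x = v <;> by_cases hyv : y = v
      · rw [hxv, hyv]
      · exfalso
        rw [if_pos hxv, if_neg hyv] at hxy
        have := hlt y (Finset.mem_erase.mpr ⟨hyv, hy⟩)
        omega
      · exfalso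
        rw [if_neg hxv, if_pos hyv] at hxy
        have := hlt x (Finset.mem_erase.mpr ⟨hxv, hx⟩)
        omega
      · rw [if_neg hxv, if_neg hyv] at hxy
        exact hinj (Finset.mem_coe.mpr (Finset.mem_erase.mpr ⟨hxv, hx⟩))
          (Finset.mem_coe.mpr (Finset.mem_erase.mpr ⟨hyv, hy⟩)) hxy
    · intro x hx
      dsimp only
      by_cases hxv : x = v
      · rw [if_pos hxv]; exact hMlt
      · rw [if_neg hxv]
        exact lt_trans (hlt x (Finset.mem_erase.mpr ⟨hxv, hx⟩)) hMlt
    · intro x hx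
      by_cases hxv : x = v
      · subst hxv
        refine le_trans (Finset.card_le_card ?_) hdeg
        intro w hw
        rw [Finset.mem_filter] at hw ⊢
        exact ⟨hw.1, hw.2.1⟩
      · have hx' : x ∈ s.erase v := Finset.mem_erase.mpr ⟨hxv, hx⟩
        have hkey : s.filter (fun w => G.Adj x w ∧
              (if w = v then M else ord w) < (if x = v then M else ord x))
            = (s.erase v).filter (fun w => G.Adj x w ∧ ord w < ord x) := by
          ext w
          rw [Finset.mem_filter, Finset.mem_filter, Finset.mem_erase]
          rw [if_neg hxv]
          by_cases hwv : w = v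
          · rw [if_pos hwv]
            have := hlt x hx'
            constructor
            · rintro ⟨-, -, hlt'⟩; omega
            · rintro ⟨⟨hne, -⟩, -⟩; exact absurd hwv hne
          · rw [if_neg hwv]
            constructor
            · rintro ⟨hws, ha, hl⟩; exact ⟨⟨hwv, hws⟩, ha, hl⟩
            · rintro ⟨⟨-, hws⟩, ha, hl⟩; exact ⟨hws, ha, hl⟩
        rw [hkey]
        exact hbound x hx'
end Deg

/-- For a finite simple graph with at least one edge, arboricity `α` and
degeneracy `β` satisfy `α ≤ β ≤ 2α - 1`. -/
theorem stmt_9 {V : Type*} [Fintype V] (G : SimpleGraph V) [DecidableRel G.Adj]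
    (h : ∃ u v, G.Adj u v) :
    arboricity G ≤ degeneracy G ∧ degeneracy G ≤ 2 * arboricity G - 1 := by
  classical
  obtain ⟨u0, v0, huv⟩ := h
  obtain ⟨ord, hinj, -, hbound⟩ := exists_ordering G Finset.univ
  have hinj' : ∀ {x y : V}, ord x = ord y → x = y := fun {x y} hxy =>
    hinj (Finset.mem_coe.mpr (Finset.mem_univ x)) (Finset.mem_coe.mpr (Finset.mem_univ y)) hxy
  set β := degeneracy G with hβ
  set B : V → Finset V := fun v =>
    Finset.univ.filter (fun w => G.Adj v w ∧ ord w < ord v) with hBdef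
  have hBcard : ∀ v, (B v).card ≤ β := fun v => hbound v (Finset.mem_univ v)
  set col : V → V → ℕ := fun v w => (B v).toList.idxOf w with hcoldef
  have hcol_lt : ∀ v w, w ∈ B v → col v w < β := by
    intro v w hw
    have h1 : (B v).toList.idxOf w < (B v).toList.length :=
      List.idxOf_lt_length_iff.mpr (Finset.mem_toList.mpr hw)
    rw [Finset.length_toList] at h1
    exact h1.trans_le (hBcard v)
  have hcol_inj : ∀ v w w', w ∈ B v → w' ∈ B v → col v w = col v w' → w = w' := by
    intro v w w' hw hw' hc
    exact (List.idxOf_inj (Finset.mem_toList.mpr hw)).mp hc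
  set c : V → V → ℕ := fun u w => if ord u < ord w then col w u else col u w with hcdef
  have hc_symm : ∀ u w, G.Adj u w → c u w = c w u := by
    intro u w ha
    have hne : ord u ≠ ord w := fun hEq => ha.ne (hinj' hEq)
    rcases lt_or_gt_of_ne hne with hlt | hlt
    · simp only [hcdef, if_pos hlt, if_neg (not_lt_of_gt hlt)]
    · simp only [hcdef, if_neg (not_lt_of_gt hlt), if_pos hlt]
  have hc_lt : ∀ u w, G.Adj u w → c u w < β := by
    intro u w ha
    have hne : ord u ≠ ord w := fun hEq => ha.ne (hinj' hEq)
    rcases lt_or_gt_of_ne hne with hlt | hlt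
    · have hu : u ∈ B w := by
        simp only [hBdef, Finset.mem_filter, Finset.mem_univ, true_and]
        exact ⟨ha.symm, hlt⟩
      simp only [hcdef, if_pos hlt]
      exact hcol_lt w u hu
    · have hw : w ∈ B u := by
        simp only [hBdef, Finset.mem_filter, Finset.mem_univ, true_and]
        exact ⟨ha, hlt⟩
      simp only [hcdef, if_neg (not_lt_of_gt hlt)]
      exact hcol_lt u w hw
  set F : Fin β → SimpleGraph V := fun i =>
    SimpleGraph.fromRel (fun u w => G.Adj u w ∧ c u w = i.val) with hFdef
  have hFadj : ∀ i u w, (F i).Adj u w ↔ (G.Adj u w ∧ c u w = i.val) := by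
    intro i u w
    simp only [hFdef, SimpleGraph.fromRel_adj]
    constructor
    · rintro ⟨hne, (⟨ha, hc⟩ | ⟨ha, hc⟩)⟩
      · exact ⟨ha, hc⟩
      · exact ⟨ha.symm, by rw [hc_symm u w ha.symm]; exact hc⟩
    · rintro ⟨ha, hc⟩
      exact ⟨ha.ne, Or.inl ⟨ha, hc⟩⟩
  have hle : ∀ i, F i ≤ G := by
    intro i u w hadj
    exact ((hFadj i u w).mp hadj).1
  have hpart : ∀ u v, G.Adj u v → ∃! i, (F i).Adj u v := by
    intro u v ha
    refine ⟨⟨c u v, hc_lt u v ha⟩, ?_, ?_⟩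
    · show (F ⟨c u v, hc_lt u v ha⟩).Adj u v
      rw [hFadj]; exact ⟨ha, rfl⟩
    · intro j hj
      rw [hFadj] at hj
      exact Fin.ext hj.2.symm
  have hacyc : ∀ i, (F i).IsAcyclic := by
    intro i v w hw
    have hlen3 := hw.three_le_length
    have hlsupp : w.support.tail.length = w.length := by
      have := w.length_support
      have h2 : w.support.tail.length = w.support.length - 1 := by
        simp [List.length_tail]
      omega
    have htne : w.support.tail ≠ [] := by
      intro hEq; rw [hEq] at hlsupp; simp at hlsupp; omega
    obtain ⟨x0, hx0⟩ := List.exists_mem_of_ne_nil _ htne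
    obtain ⟨u, hu_mem, hu_max⟩ := Finset.exists_max_image w.support.tail.toFinset ord
      ⟨x0, List.mem_toFinset.mpr hx0⟩
    rw [List.mem_toFinset] at hu_mem
    have hu : u ∈ w.support := List.mem_of_mem_tail hu_mem
    have hc' := hw.rotate hu
    obtain ⟨b, h₁, q, hq⟩ := SimpleGraph.Walk.not_nil_iff.mp hc'.not_nil
    have hlq : 2 ≤ q.length := by
      have h3 := hc'.three_le_length
      rw [hq] at h3
      simp only [SimpleGraph.Walk.length_cons] at h3
      omega
    have hqpath : q.IsPath := by
      have := hc'
      rw [hq, SimpleGraph.Walk.cons_isCycle_iff] at this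
      exact this.1
    have hqrnn : ¬ q.reverse.Nil := by
      rw [SimpleGraph.Walk.not_nil_iff_lt_length, SimpleGraph.Walk.length_reverse]
      omega
    obtain ⟨a, h₂, r, hr⟩ := SimpleGraph.Walk.not_nil_iff.mp hqrnn
    have hab : a ≠ b := by
      rintro rfl
      have hrp : q.reverse.IsPath := hqpath.reverse
      rw [hr, SimpleGraph.Walk.cons_isPath_iff] at hrp
      have := (SimpleGraph.Walk.isPath_iff_eq_nil (p := r)).mp hrp.1
      rw [this] at hr
      have : q.reverse.length = 1 := by rw [hr]; simp
      rw [SimpleGraph.Walk.length_reverse] at this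
      omega
    have hsupptail : (w.rotate u hu).support.tail = q.support := by
      rw [hq, SimpleGraph.Walk.support_cons, List.tail_cons]
    have hmemtail : ∀ x, x ∈ q.support → x ∈ w.support.tail := by
      intro x hx
      have hrot := SimpleGraph.Walk.support_rotate w u hu
      rw [hsupptail] at hrot
      exact hrot.perm.mem_iff.mp hx
    have hbmem : b ∈ w.support.tail := hmemtail b q.start_mem_support
    have hamem : a ∈ w.support.tail := by
      apply hmemtail
      have : a ∈ q.reverse.support := by
        rw [hr, SimpleGraph.Walk.support_cons]
        exact List.mem_cons_of_mem _ r.start_mem_support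
      rwa [SimpleGraph.Walk.support_reverse, List.mem_reverse] at this
    have h₁' := (hFadj i u b).mp h₁
    have h₂' := (hFadj i u a).mp h₂
    have hbu : ord b < ord u := by
      have hle1 := hu_max b (List.mem_toFinset.mpr hbmem)
      have : b ≠ u := fun hEq => (h₁'.1.ne (hEq ▸ rfl)).elim
      rcases lt_or_eq_of_le hle1 with h | h
      · exact h
      · exact absurd (hinj' h) this
    have hau : ord a < ord u := by
      have hle1 := hu_max a (List.mem_toFinset.mpr hamem)
      have : a ≠ u := fun hEq => (h₂'.1.ne (hEq ▸ rfl)).elim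
      rcases lt_or_eq_of_le hle1 with h | h
      · exact h
      · exact absurd (hinj' h) this
    have hcb : col u b = i.val := by
      have := h₁'.2
      simp only [hcdef, if_neg (not_lt_of_gt hbu)] at this
      exact this
    have hca : col u a = i.val := by
      have := h₂'.2
      simp only [hcdef, if_neg (not_lt_of_gt hau)] at this
      exact this
    have hbB : b ∈ B u := by
      simp only [hBdef, Finset.mem_filter, Finset.mem_univ, true_and]
      exact ⟨h₁'.1, hbu⟩
    have haB : a ∈ B u := by
      simp only [hBdef, Finset.mem_filter, Finset.mem_univ, true_and]
      exact ⟨h₂'.1, hau⟩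
    exact hab (hcol_inj u a b haB hbB (hca.trans hcb.symm))
  have hmem_arb : β ∈ {n : ℕ | ∃ F : Fin n → SimpleGraph V, (∀ i, (F i).IsAcyclic) ∧
      (∀ i, F i ≤ G) ∧ ∀ u v, G.Adj u v → ∃! i, (F i).Adj u v} :=
    ⟨F, hacyc, hle, hpart⟩
  have part1 : arboricity G ≤ β := Nat.sInf_le hmem_arb
  refine ⟨part1, ?_⟩
  -- part 2
  clear hacyc hle hpart hFadj hc_symm hc_lt hcol_lt hcol_inj hBcard hbound hinj hinj'
  clear_value F c col B β
  clear hFdef hcdef hcoldef hBdef F c col B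
  have hne : {n : ℕ | ∃ F : Fin n → SimpleGraph V, (∀ i, (F i).IsAcyclic) ∧
      (∀ i, F i ≤ G) ∧ ∀ u v, G.Adj u v → ∃! i, (F i).Adj u v}.Nonempty := ⟨β, hmem_arb⟩
  have harb : arboricity G ∈ {n : ℕ | ∃ F : Fin n → SimpleGraph V, (∀ i, (F i).IsAcyclic) ∧
      (∀ i, F i ≤ G) ∧ ∀ u v, G.Adj u v → ∃! i, (F i).Adj u v} := by
    rw [arboricity]; exact Nat.sInf_mem hne
  obtain ⟨F', hac', hle', huniq'⟩ := harb
  have hα1 : 1 ≤ arboricity G := by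
    rcases Nat.eq_zero_or_pos (arboricity G) with h0 | hpos
    · exfalso
      obtain ⟨i, -, -⟩ := huniq' u0 v0 huv
      have := i.isLt
      omega
    · exact hpos
  have h0mem : (0 : ℕ) ∈ {d : ℕ | ∃ s : Finset V, s.Nonempty ∧
      ∀ v ∈ s, d ≤ (s.filter (fun w => G.Adj v w)).card} :=
    ⟨{u0}, Finset.singleton_nonempty u0, fun v _ => Nat.zero_le _⟩
  rw [hβ, degeneracy]
  apply csSup_le ⟨0, h0mem⟩
  rintro d ⟨s, hsne, hd⟩
  have hc1 : 1 ≤ s.card := Finset.card_pos.mpr hsne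
  have h1 : d * s.card ≤ ∑ v ∈ s, (s.filter (fun w => G.Adj v w)).card := by
    calc d * s.card = s.card • d := by rw [smul_eq_mul, mul_comm]
      _ ≤ ∑ v ∈ s, (s.filter (fun w => G.Adj v w)).card :=
        Finset.card_nsmul_le_sum s _ d (fun v hv => hd v hv)
  have h2 : ∀ v ∈ s, (s.filter (fun w => G.Adj v w)).card
      = ∑ i, (s.filter (fun w => (F' i).Adj v w)).card := by
    intro v hv
    have hset : s.filter (fun w => G.Adj v w)
        = Finset.univ.biUnion (fun i => s.filter (fun w => (F' i).Adj v w)) := by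
      ext w
      simp only [Finset.mem_filter, Finset.mem_biUnion, Finset.mem_univ, true_and]
      constructor
      · rintro ⟨hws, hadj⟩
        obtain ⟨i, hi, -⟩ := huniq' v w hadj
        exact ⟨i, hws, hi⟩
      · rintro ⟨i, hws, hadj⟩
        exact ⟨hws, hle' i hadj⟩
    rw [hset, Finset.card_biUnion]
    rintro i - j - hij
    simp only [Finset.disjoint_left, Finset.mem_filter]
    rintro x ⟨-, hxi⟩ ⟨-, hxj⟩
    exact hij ((huniq' v x (hle' i hxi)).unique hxi hxj)
  have h3 : (∑ v ∈ s, (s.filter (fun w => G.Adj v w)).card)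
      = ∑ i, ∑ v ∈ s, (s.filter (fun w => (F' i).Adj v w)).card := by
    rw [Finset.sum_congr rfl h2, Finset.sum_comm]
  have h4 : ∀ i : Fin (arboricity G),
      (∑ v ∈ s, (s.filter (fun w => (F' i).Adj v w)).card) ≤ 2 * (s.card - 1) := by
    intro i
    exact forest_sum (H := F' i) (hac' i) s
  have h5 : d * s.card ≤ arboricity G * (2 * (s.card - 1)) := by
    calc d * s.card ≤ ∑ i, ∑ v ∈ s, (s.filter (fun w => (F' i).Adj v w)).card := by
          rw [← h3]; exact h1
      _ ≤ (Finset.univ : Finset (Fin (arboricity G))).card • (2 * (s.card - 1)) :=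
          Finset.sum_le_card_nsmul _ _ _ (fun i _ => h4 i)
      _ = arboricity G * (2 * (s.card - 1)) := by
          rw [Finset.card_univ, Fintype.card_fin, smul_eq_mul]
  obtain ⟨k, hk⟩ : ∃ k, s.card = k + 1 := ⟨s.card - 1, by omega⟩
  by_contra hcon
  push_neg at hcon
  have hd2 : 2 * arboricity G ≤ d := by omega
  rw [hk] at h5
  have h6 : 2 * arboricity G * (k + 1) ≤ d * (k + 1) := Nat.mul_le_mul_right _ hd2
  have h7 : arboricity G * (2 * (k + 1 - 1)) = 2 * arboricity G * k := by
    simp; ring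
  rw [h7] at h5
  have h8 : 2 * arboricity G * (k + 1) = 2 * arboricity G * k + 2 * arboricity G := by ring
  rw [h8] at h6
  have h9 : 2 * arboricity G * k + 2 * arboricity G ≤ 2 * arboricity G * k := le_trans h6 h5
  have h10 : 2 * arboricity G ≤ 0 := by
    exact Nat.le_of_add_le_add_left (by omega : 2 * arboricity G * k + 2 * arboricity G ≤ 2 * arboricity G * k + 0)
  omega
end

section
/- Define T(l, C) for integers l ≥ 2 and finite sets C by T(2,C) = 2·Σ_{u∈C}(|C| + d⁺(u)) and T(l,C) = Σ_{u∈C}(|C| + d⁺(u)) + Σ_{u∈C} T(l−1, N⁺(u) ∩ C), where d⁺(u) = |N⁺(u)| ≤ Δ, |C| ≤ Δ, and Σ_{u∈C}|N⁺(u)∩C| ≤ |C|(Δ−1)/2 for every C arising in the recursion. Then for all 2 ≤ l ≤ k−1 and Δ ≥ 2, k ≥ 3: T(l, C) ≤ 2Δ(k + l/2)(Δ/2)^{l−2}·|C|. -/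
/-- The recurrence bound for the cost of `SDegreeList`: if
`T 2 C = 2 ∑_{u ∈ C} (|C| + d⁺(u))` and for `l ≥ 3`
`T l C = ∑_{u ∈ C} (|C| + d⁺(u)) + ∑_{u ∈ C} T (l-1) (N⁺(u) ∩ C)`, where all
out-degrees are at most `Δ` and `∑_{u ∈ C} |N⁺(u) ∩ C| ≤ |C|(Δ-1)/2` whenever
`|C| ≤ Δ`, then for all `2 ≤ l ≤ k - 1` (with `Δ ≥ 2`, `k ≥ 3`) and all `C` with
`|C| ≤ Δ`:  `T l C ≤ 2Δ (k + l/2) (Δ/2)^(l-2) |C|`. -/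
theorem stmt_15 {V : Type*} [DecidableEq V] (N : V → Finset V) (Δ k : ℕ)
    (hΔ : 2 ≤ Δ) (hk : 3 ≤ k)
    (hdeg : ∀ u, (N u).card ≤ Δ)
    (T : ℕ → Finset V → ℝ)
    (hT2 : ∀ C : Finset V, T 2 C = 2 * ∑ u ∈ C, ((C.card : ℝ) + (N u).card))
    (hTl : ∀ l, 3 ≤ l → ∀ C : Finset V,
      T l C = (∑ u ∈ C, ((C.card : ℝ) + (N u).card))
        + ∑ u ∈ C, T (l - 1) (N u ∩ C))
    (hsum : ∀ C : Finset V, C.card ≤ Δ →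
      (∑ u ∈ C, ((N u ∩ C).card : ℝ)) ≤ (C.card : ℝ) * ((Δ : ℝ) - 1) / 2) :
    ∀ l, 2 ≤ l → l ≤ k - 1 → ∀ C : Finset V, C.card ≤ Δ →
      T l C ≤ 2 * (Δ : ℝ) * ((k : ℝ) + (l : ℝ) / 2) * ((Δ : ℝ) / 2) ^ (l - 2)
        * (C.card : ℝ) := by
  have hΔR : (2:ℝ) ≤ (Δ:ℝ) := by exact_mod_cast hΔ
  have hkR : (3:ℝ) ≤ (k:ℝ) := by exact_mod_cast hk
  intro l hl2
  induction l, hl2 using Nat.le_induction with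
  | base =>
    intro _ C hC
    rw [hT2 C]
    have hCR : (C.card : ℝ) ≤ (Δ:ℝ) := by exact_mod_cast hC
    have hCnn : (0:ℝ) ≤ (C.card : ℝ) := Nat.cast_nonneg _
    have hsum1 : (∑ u ∈ C, ((C.card : ℝ) + (N u).card)) ≤ C.card * (2 * Δ) := by
      calc (∑ u ∈ C, ((C.card : ℝ) + (N u).card))
          ≤ ∑ _u ∈ C, ((Δ:ℝ) + Δ) := by
            apply Finset.sum_le_sum
            intro u _
            have : ((N u).card : ℝ) ≤ (Δ:ℝ) := by exact_mod_cast hdeg u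
            linarith
        _ = C.card * (2 * Δ) := by rw [Finset.sum_const]; push_cast; ring
    simp only [Nat.sub_self, pow_zero]
    nlinarith [mul_nonneg hCnn (sub_nonneg.2 hΔR)]
  | succ l hl IH =>
    intro hlk C hC
    have hlk' : l ≤ k - 1 := by omega
    have h3 : 3 ≤ l + 1 := by omega
    rw [hTl (l+1) h3 C]
    simp only [Nat.add_sub_cancel]
    have hCR : (C.card : ℝ) ≤ (Δ:ℝ) := by exact_mod_cast hC
    have hCnn : (0:ℝ) ≤ (C.card : ℝ) := Nat.cast_nonneg _
    have hlR : (2:ℝ) ≤ (l:ℝ) := by exact_mod_cast hl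
    set B : ℝ := 2 * (Δ:ℝ) * ((k:ℝ) + (l:ℝ)/2) * ((Δ:ℝ)/2) ^ (l-2) with hB
    have hh : (1:ℝ) ≤ (Δ:ℝ)/2 := by linarith
    have hx1 : (1:ℝ) ≤ ((Δ:ℝ)/2) ^ (l-2) := one_le_pow₀ hh
    have hBnn : (0:ℝ) ≤ B := by
      apply mul_nonneg
      · nlinarith
      · positivity
    have hsum1 : (∑ u ∈ C, ((C.card : ℝ) + (N u).card)) ≤ 2 * Δ * C.card := by
      calc (∑ u ∈ C, ((C.card : ℝ) + (N u).card))
          ≤ ∑ _u ∈ C, ((Δ:ℝ) + Δ) := by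
            apply Finset.sum_le_sum
            intro u _
            have : ((N u).card : ℝ) ≤ (Δ:ℝ) := by exact_mod_cast hdeg u
            linarith
        _ = 2 * Δ * C.card := by rw [Finset.sum_const]; push_cast; ring
    have hsum2 : (∑ u ∈ C, T l (N u ∩ C)) ≤ B * ((C.card : ℝ) * ((Δ:ℝ) - 1) / 2) := by
      calc (∑ u ∈ C, T l (N u ∩ C))
          ≤ ∑ u ∈ C, B * ((N u ∩ C).card : ℝ) := by
            apply Finset.sum_le_sum
            intro u _
            exact IH hlk' (N u ∩ C)
              (le_trans (Finset.card_le_card (Finset.inter_subset_left)) (hdeg u))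
        _ = B * ∑ u ∈ C, ((N u ∩ C).card : ℝ) := by rw [Finset.mul_sum]
        _ ≤ B * ((C.card : ℝ) * ((Δ:ℝ) - 1) / 2) :=
            mul_le_mul_of_nonneg_left (hsum C hC) hBnn
    have hpow : ((Δ:ℝ)/2) ^ (l+1-2) = ((Δ:ℝ)/2) ^ (l-2) * ((Δ:ℝ)/2) := by
      have : l + 1 - 2 = (l - 2) + 1 := by omega
      rw [this, pow_succ]
    have key : 2 * Δ * (C.card:ℝ) + B * ((C.card : ℝ) * ((Δ:ℝ) - 1) / 2)
        ≤ 2 * (Δ : ℝ) * ((k : ℝ) + ((l:ℝ)+1) / 2) * ((Δ : ℝ) / 2) ^ (l + 1 - 2)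
          * (C.card : ℝ) := by
      rw [hpow, hB]
      set x : ℝ := ((Δ:ℝ)/2) ^ (l-2)
      nlinarith [mul_nonneg hCnn (sub_nonneg.2 hx1), mul_nonneg hCnn (by linarith : (0:ℝ) ≤ (Δ:ℝ)),
        mul_nonneg (mul_nonneg hCnn (sub_nonneg.2 hx1)) (by linarith : (0:ℝ) ≤ (Δ:ℝ)),
        mul_nonneg hCnn (sub_nonneg.2 hΔR)]
    push_cast
    push_cast at hsum2 key
    linarith
end
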